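/- Let G be a connected simple graph on 3 vertices {1,2,3}. Let |G⟩ ∈ ℂ^(Fin 3 → Fin 2) be its graph state and let |GHZ₃⟩ ∈ ℂ^(Fin 3 → Fin 2) be the three-qubit GHZ state, given by |GHZ₃⟩(x) = 1/√2 if x is a constant function and 0 otherwise. Then there exist 2×2 unitary matrices U₁, U₂, U₃ over ℂ and a complex number c with |c| = 1 such that (U₁ ⊗ U₂ ⊗ U₃)|G⟩ = c·|GHZ₃⟩. -/

import Mathlib

open scoped BigOperators

/-- The graph state of a simple graph `G` on `N` qubits: the vector in
`ℂ^(Fin N → Fin 2)` with amplitudes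
`|G⟩(x) = 2^(−N/2) · (−1)^(number of edges {i,j} of G with x i = 1 and x j = 1)`. -/
noncomputable def graphState {N : ℕ} (G : SimpleGraph (Fin N)) [DecidableRel G.Adj] :
    (Fin N → Fin 2) → ℂ :=
  fun x => ((1 / Real.sqrt 2 : ℝ) : ℂ) ^ N *
    (-1 : ℂ) ^ (Finset.univ.filter
      (fun p : Fin N × Fin N =>
        p.1 < p.2 ∧ G.Adj p.1 p.2 ∧ x p.1 = 1 ∧ x p.2 = 1)).card

/-- The `N`-qubit GHZ state: amplitude `1/√2` on constant functions, `0` elsewhere. -/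
noncomputable def ghzState (N : ℕ) : (Fin N → Fin 2) → ℂ :=
  fun x => if ∀ i j : Fin N, x i = x j then ((1 / Real.sqrt 2 : ℝ) : ℂ) else 0

noncomputable def q : ℂ := (Real.sqrt 2 : ℝ)

lemma hq2 : q ^ 2 = 2 := by
  rw [q, ← Complex.ofReal_pow, Real.sq_sqrt (by norm_num : (0:ℝ) ≤ 2)]
  norm_num

lemma hq3 : q ^ 3 = 2 * q := by rw [pow_succ, hq2]
lemma hq4 : q ^ 4 = 4 := by rw [show (4:ℕ) = 2+2 from rfl, pow_add, hq2]; norm_num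
lemma hq5 : q ^ 5 = 4 * q := by rw [pow_succ, hq4]
lemma hq6 : q ^ 6 = 8 := by rw [pow_succ, hq5]; rw [mul_assoc, ← pow_two, hq2]; norm_num

lemma hconst : ((1 / Real.sqrt 2 : ℝ) : ℂ) = q / 2 := by
  have h : (1 / Real.sqrt 2 : ℝ) = Real.sqrt 2 / 2 := by
    rw [div_eq_div_iff (by positivity) (by norm_num), one_mul,
      Real.mul_self_sqrt (by norm_num : (0:ℝ) ≤ 2)]
  rw [h, q, Complex.ofReal_div]
  norm_num

def e3 : (Fin 2 × Fin 2 × Fin 2) ≃ (Fin 3 → Fin 2) where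
  toFun p := ![p.1, p.2.1, p.2.2]
  invFun y := (y 0, y 1, y 2)
  left_inv p := rfl
  right_inv y := by funext i; fin_cases i <;> rfl

lemma sum_fin3 (f : (Fin 3 → Fin 2) → ℂ) :
    ∑ y : Fin 3 → Fin 2, f y =
      f ![0,0,0] + f ![0,0,1] + f ![0,1,0] + f ![0,1,1] +
      f ![1,0,0] + f ![1,0,1] + f ![1,1,0] + f ![1,1,1] := by
  rw [← Fintype.sum_equiv e3 (fun p => f (e3 p)) f (fun p => rfl)]
  simp only [Fintype.sum_prod_type, Fin.sum_univ_two, e3, Equiv.coe_fn_mk]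
  simp only [add_assoc]; rfl

lemma gs_eval (G : SimpleGraph (Fin 3)) [DecidableRel G.Adj] (y : Fin 3 → Fin 2) :
    graphState G y = (q / 2) ^ 3 *
      (-1 : ℂ) ^ ((if G.Adj 0 1 ∧ y 0 = 1 ∧ y 1 = 1 then 1 else 0)
        + (if G.Adj 0 2 ∧ y 0 = 1 ∧ y 2 = 1 then 1 else 0)
        + (if G.Adj 1 2 ∧ y 1 = 1 ∧ y 2 = 1 then 1 else 0)) := by
  unfold graphState
  rw [hconst]
  congr 2
  rw [Finset.card_filter, Fintype.sum_prod_type]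
  simp only [Fin.sum_univ_three]
  norm_num [show (0:Fin 3) < 1 from by decide, show (0:Fin 3) < 2 from by decide,
    show (1:Fin 3) < 2 from by decide, show ¬((1:Fin 3) < 0) from by decide,
    show ¬((2:Fin 3) < 0) from by decide, show ¬((2:Fin 3) < 1) from by decide,
    show ¬((0:Fin 3) < 0) from by decide, show ¬((1:Fin 3) < 1) from by decide,
    show ¬((2:Fin 3) < 2) from by decide]

lemma ghz_eval (x : Fin 3 → Fin 2) :
    ghzState 3 x = if x 0 = x 1 ∧ x 0 = x 2 then q / 2 else 0 := by
  unfold ghzState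
  rw [hconst]
  refine if_congr ?_ rfl rfl
  constructor
  · intro h; exact ⟨h 0 1, h 0 2⟩
  · rintro ⟨h1, h2⟩ i j
    fin_cases i <;> fin_cases j <;> simp_all

lemma isolated {G : SimpleGraph (Fin 3)} {v u : Fin 3} (h : ∀ w, ¬ G.Adj v w)
    (hne : v ≠ u) : ¬ G.Reachable v u := by
  intro hr
  obtain ⟨p⟩ := hr
  cases p with
  | nil => exact hne rfl
  | cons h' _ => exact h _ h'

lemma fin2cases (i : Fin 2) : i = 0 ∨ i = 1 := by omega

lemma hqconj : (starRingEnd ℂ) q = q := Complex.conj_ofReal _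

lemma hI2 : Complex.I ^ 2 = -1 := Complex.I_sq
lemma hI3 : Complex.I ^ 3 = -Complex.I := by rw [pow_succ, hI2]; ring

noncomputable def Hm : Matrix (Fin 2) (Fin 2) ℂ := !![q/2, q/2; q/2, -(q/2)]
noncomputable def Vm : Matrix (Fin 2) (Fin 2) ℂ :=
  !![q/2, Complex.I * q/2; Complex.I * q/2, q/2]
noncomputable def Wm : Matrix (Fin 2) (Fin 2) ℂ :=
  !![q/2, Complex.I * q/2; -(Complex.I * q/2), -(q/2)]

lemma Hm_unitary : Hm ∈ Matrix.unitaryGroup (Fin 2) ℂ := by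
  rw [Matrix.mem_unitaryGroup_iff]
  ext i j
  fin_cases i <;> fin_cases j <;>
    (simp [Hm, Matrix.mul_apply, Fin.sum_univ_two, Matrix.one_apply, Matrix.conjTranspose_apply,
      Complex.star_def, map_div₀, map_ofNat, Complex.conj_ofReal, Complex.conj_I, hqconj] <;>
     try ring <;> try (ring_nf; simp [hq2, hI2, hI3]) <;> try ring_nf <;> try norm_num)
  all_goals norm_num [hq2, hI2]

lemma Vm_unitary : Vm ∈ Matrix.unitaryGroup (Fin 2) ℂ := by
  rw [Matrix.mem_unitaryGroup_iff]
  ext i j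
  fin_cases i <;> fin_cases j <;>
    (simp [Vm, Matrix.mul_apply, Fin.sum_univ_two, Matrix.one_apply, Matrix.conjTranspose_apply,
      Complex.star_def, map_div₀, map_ofNat, Complex.conj_ofReal, Complex.conj_I, hqconj] <;>
     try ring <;> try (ring_nf; simp [hq2, hI2, hI3]) <;> try ring_nf <;> try norm_num)
  all_goals norm_num [hq2, hI2]

lemma Wm_unitary : Wm ∈ Matrix.unitaryGroup (Fin 2) ℂ := by
  rw [Matrix.mem_unitaryGroup_iff]
  ext i j
  fin_cases i <;> fin_cases j <;>
    (simp [Wm, Matrix.mul_apply, Fin.sum_univ_two, Matrix.one_apply, Matrix.conjTranspose_apply,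
      Complex.star_def, map_div₀, map_ofNat, Complex.conj_ofReal, Complex.conj_I, hqconj] <;>
     try ring <;> try (ring_nf; simp [hq2, hI2, hI3]) <;> try ring_nf <;> try norm_num)
  all_goals norm_num [hq2, hI2]

lemma one_unitary : (1 : Matrix (Fin 2) (Fin 2) ℂ) ∈ Matrix.unitaryGroup (Fin 2) ℂ := by
  rw [Matrix.mem_unitaryGroup_iff]; simp

lemma abs_ctri : ‖(1 + Complex.I) * q / 2‖ = 1 := by
  rw [norm_div, norm_mul]
  rw [show ‖q‖ = Real.sqrt 2 from by
    rw [q, Complex.norm_real, Real.norm_of_nonneg (Real.sqrt_nonneg 2)]]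
  rw [Complex.norm_def, Complex.normSq_apply]
  simp
  rw [show (1:ℝ)+1 = 2 from by norm_num, Real.mul_self_sqrt (by norm_num : (0:ℝ) ≤ 2)]
  norm_num


set_option maxHeartbeats 2000000 in
/-- every connected graph state on 3 qubits is local-unitarily equivalent
(up to a global phase) to the three-qubit GHZ state. -/
theorem connected_three_vertex_graphState_LU_GHZ
    (G : SimpleGraph (Fin 3)) [DecidableRel G.Adj] (hconn : G.Connected) :
    ∃ (U₁ U₂ U₃ : Matrix (Fin 2) (Fin 2) ℂ) (c : ℂ),
      U₁ ∈ Matrix.unitaryGroup (Fin 2) ℂ ∧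
      U₂ ∈ Matrix.unitaryGroup (Fin 2) ℂ ∧
      U₃ ∈ Matrix.unitaryGroup (Fin 2) ℂ ∧
      ‖c‖ = 1 ∧
      ∀ x : Fin 3 → Fin 2,
        (∑ y : Fin 3 → Fin 2,
            U₁ (x 0) (y 0) * U₂ (x 1) (y 1) * U₃ (x 2) (y 2) * graphState G y)
          = c * ghzState 3 x := by
  by_cases ha : G.Adj 0 1 <;> by_cases hb : G.Adj 0 2 <;> by_cases hc : G.Adj 1 2
  · -- triangle
    refine ⟨Wm, Vm, Vm, (1 + Complex.I) * q / 2, Wm_unitary, Vm_unitary, Vm_unitary, abs_ctri, ?_⟩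
    intro x
    rw [sum_fin3, ghz_eval]
    simp only [gs_eval, ha, hb, hc]
    rcases fin2cases (x 0) with h0|h0 <;> rcases fin2cases (x 1) with h1|h1 <;>
      rcases fin2cases (x 2) with h2|h2 <;> rw [h0, h1, h2] <;>
      norm_num [Vm, Wm, Matrix.one_apply, Matrix.cons_val_zero, Matrix.cons_val_one,
        Matrix.head_cons,
        show ((0:Fin 2) = 1) = False from by simp, show ((1:Fin 2) = 0) = False from by simp] <;>
      ring_nf <;> simp [hq2, hq3, hq4, hq5, hq6, hI2, hI3] <;> try ring_nf <;> try norm_num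
    all_goals (rw [hq2]; ring)
  · -- star center 0 : edges 01, 02
    refine ⟨1, Hm, Hm, 1, one_unitary, Hm_unitary, Hm_unitary, by simp, ?_⟩
    intro x
    rw [sum_fin3, ghz_eval]
    simp only [gs_eval, ha, hb, hc]
    rcases fin2cases (x 0) with h0|h0 <;> rcases fin2cases (x 1) with h1|h1 <;>
      rcases fin2cases (x 2) with h2|h2 <;> rw [h0, h1, h2] <;>
      norm_num [Hm, Matrix.one_apply, Matrix.cons_val_zero, Matrix.cons_val_one, Matrix.head_cons,
        show ((0:Fin 2) = 1) = False from by simp, show ((1:Fin 2) = 0) = False from by simp] <;>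
      ring_nf <;> simp [hq2, hq3, hq4, hq5, hq6, hI2, hI3] <;> try ring_nf <;> try norm_num
  · -- star center 1 : edges 01, 12
    refine ⟨Hm, 1, Hm, 1, Hm_unitary, one_unitary, Hm_unitary, by simp, ?_⟩
    intro x
    rw [sum_fin3, ghz_eval]
    simp only [gs_eval, ha, hb, hc]
    rcases fin2cases (x 0) with h0|h0 <;> rcases fin2cases (x 1) with h1|h1 <;>
      rcases fin2cases (x 2) with h2|h2 <;> rw [h0, h1, h2] <;>
      norm_num [Hm, Matrix.one_apply, Matrix.cons_val_zero, Matrix.cons_val_one, Matrix.head_cons,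
        show ((0:Fin 2) = 1) = False from by simp, show ((1:Fin 2) = 0) = False from by simp] <;>
      ring_nf <;> simp [hq2, hq3, hq4, hq5, hq6, hI2, hI3] <;> try ring_nf <;> try norm_num
  · -- only edge 01 : vertex 2 isolated
    exact absurd (hconn.preconnected 2 0)
      (isolated (fun w => by fin_cases w <;> first
        | exact fun h => hb (G.adj_symm h) | exact fun h => hc (G.adj_symm h)
        | exact G.irrefl) (by decide))
  · -- star center 2 : edges 02, 12
    refine ⟨Hm, Hm, 1, 1, Hm_unitary, Hm_unitary, one_unitary, by simp, ?_⟩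
    intro x
    rw [sum_fin3, ghz_eval]
    simp only [gs_eval, ha, hb, hc]
    rcases fin2cases (x 0) with h0|h0 <;> rcases fin2cases (x 1) with h1|h1 <;>
      rcases fin2cases (x 2) with h2|h2 <;> rw [h0, h1, h2] <;>
      norm_num [Hm, Matrix.one_apply, Matrix.cons_val_zero, Matrix.cons_val_one, Matrix.head_cons,
        show ((0:Fin 2) = 1) = False from by simp, show ((1:Fin 2) = 0) = False from by simp] <;>
      ring_nf <;> simp [hq2, hq3, hq4, hq5, hq6, hI2, hI3] <;> try ring_nf <;> try norm_num
  · -- only edge 02 : vertex 1 isolated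
    exact absurd (hconn.preconnected 1 0)
      (isolated (fun w => by fin_cases w <;> first
        | exact fun h => ha (G.adj_symm h) | exact hc | exact G.irrefl) (by decide))
  · -- only edge 12 : vertex 0 isolated
    exact absurd (hconn.preconnected 0 1)
      (isolated (fun w => by fin_cases w <;> first
        | exact ha | exact hb | exact G.irrefl) (by decide))
  · -- no edges : vertex 0 isolated
    exact absurd (hconn.preconnected 0 1)
      (isolated (fun w => by fin_cases w <;> first
        | exact ha | exact hb | exact G.irrefl) (by decide))
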